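/- If all agents have strictly negative utilities for all items (items are chores) and the picking sequence is round-robin (agents take turns in a fixed cyclic order π_1,...,π_n repeatedly), then the sequential allocation, where each agent on their turn picks a least-bad remaining item, is EF1: for all agents i, j there exists an item o ∈ p(i) such that u_i(p(i) \ {o}) ≥ u_i(p(j)). -/

import Mathlib

open Finset

/-- Sequential allocation: each agent on their turn picks a remaining item of maximal utility
(for chores, a least-bad remaining item). -/
def seqValid {A O : Type*} [DecidableEq O] (u : A → O → ℝ) :
    List A → List O → Finset O → Prop
  | [], [], _ => True
  | a :: s, o :: ps, rem =>
      o ∈ rem ∧ (∀ o' ∈ rem, u a o' ≤ u a o) ∧ seqValid u s ps (rem.erase o)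
  | _, _, _ => False

/-- The bundle of items picked by agent `i` in the run `(seq, picks)`. -/
def bundleOf {A O : Type*} [DecidableEq A] [DecidableEq O]
    (seq : List A) (picks : List O) (i : A) : Finset O :=
  ((seq.zip picks).filterMap (fun x => if x.1 = i then some x.2 else none)).toFinset

lemma seqValid_length {A O : Type*} [DecidableEq O] (u : A → O → ℝ) :
    ∀ (s : List A) (ps : List O) (rem : Finset O), seqValid u s ps rem → ps.length = s.length
  | [], [], _, _ => rfl
  | [], _ :: _, _, h => absurd h (by simp [seqValid])
  | _ :: _, [], _, h => absurd h (by simp [seqValid])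
  | a :: s, o :: ps, rem, h => by
      simp only [seqValid] at h
      simp [seqValid_length u s ps _ h.2.2]

lemma seqValid_mem {A O : Type*} [DecidableEq O] (u : A → O → ℝ) :
    ∀ (s : List A) (ps : List O) (rem : Finset O), seqValid u s ps rem →
      ∀ o ∈ ps, o ∈ rem
  | [], [], _, _ => by simp
  | [], _ :: _, _, h => absurd h (by simp [seqValid])
  | _ :: _, [], _, h => by simp
  | a :: s, o :: ps, rem, h => by
      simp only [seqValid] at h
      intro x hx
      rcases List.mem_cons.mp hx with rfl | hx
      · exact h.1
      · exact Finset.mem_of_mem_erase (seqValid_mem u s ps _ h.2.2 x hx)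

lemma seqValid_nodup {A O : Type*} [DecidableEq O] (u : A → O → ℝ) :
    ∀ (s : List A) (ps : List O) (rem : Finset O), seqValid u s ps rem → ps.Nodup
  | [], [], _, _ => by simp
  | [], _ :: _, _, h => absurd h (by simp [seqValid])
  | _ :: _, [], _, h => by simp
  | a :: s, o :: ps, rem, h => by
      simp only [seqValid] at h
      refine List.nodup_cons.mpr ⟨fun hx => ?_, seqValid_nodup u s ps _ h.2.2⟩
      exact (Finset.notMem_erase o rem) (seqValid_mem u s ps _ h.2.2 o hx)

lemma seqValid_greedy {A O : Type*} [DecidableEq O] (u : A → O → ℝ) :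
    ∀ (s : List A) (ps : List O) (rem : Finset O), seqValid u s ps rem →
      ∀ k k' (hk : k < s.length) (hkp : k < ps.length) (hk' : k' < ps.length), k ≤ k' →
        u (s.get ⟨k, hk⟩) (ps.get ⟨k', hk'⟩) ≤ u (s.get ⟨k, hk⟩) (ps.get ⟨k, hkp⟩)
  | [], [], _, _ => by simp
  | [], _ :: _, _, h => absurd h (by simp [seqValid])
  | _ :: _, [], _, h => absurd h (by simp [seqValid])
  | a :: s, o :: ps, rem, h => by
      simp only [seqValid] at h
      intro k k' hk hkp hk' hkk
      match k, k' with
      | 0, 0 => simp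
      | 0, (k' + 1) =>
          simp only [List.get_cons_succ, List.get_cons_zero]
          exact h.2.1 _ (Finset.mem_of_mem_erase
            (seqValid_mem u s ps _ h.2.2 _ (List.get_mem _ _)))
      | (k + 1), 0 => omega
      | (k + 1), (k' + 1) =>
          simp only [List.get_cons_succ]
          exact seqValid_greedy u s ps _ h.2.2 k k' _ _ _ (by omega)

lemma mem_bundleOf {A O : Type*} [DecidableEq A] [DecidableEq O]
    (seq : List A) (picks : List O) (i : A) (o : O) :
    o ∈ bundleOf seq picks i ↔
      ∃ k, ∃ (h1 : k < seq.length) (h2 : k < picks.length),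
        seq.get ⟨k, h1⟩ = i ∧ picks.get ⟨k, h2⟩ = o := by
  simp only [bundleOf, List.mem_toFinset, List.mem_filterMap,
    Option.ite_none_right_eq_some, Option.some.injEq, List.get_eq_getElem]
  constructor
  · rintro ⟨x, hx, hfx1, hfx2⟩
    obtain ⟨⟨k, hk⟩, hget⟩ := List.mem_iff_get.mp hx
    have hk1 : k < seq.length := lt_of_lt_of_le hk (by simp [List.length_zip])
    have hk2 : k < picks.length := lt_of_lt_of_le hk (by simp [List.length_zip])
    have hz : (seq.zip picks).get ⟨k, hk⟩ = (seq[k], picks[k]) := by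
      simp [List.get_eq_getElem, List.getElem_zip]
    rw [hz] at hget
    subst hget
    exact ⟨k, hk1, hk2, hfx1, hfx2⟩
  · rintro ⟨k, h1, h2, hs, hpk⟩
    refine ⟨(seq[k], picks[k]), ?_, hs, hpk⟩
    have hk : k < (seq.zip picks).length := by simp [List.length_zip]; omega
    exact List.mem_iff_get.mpr ⟨⟨k, hk⟩, by simp [List.get_eq_getElem, List.getElem_zip]⟩


/-- For chores (all utilities strictly negative), sequential allocation along a round-robin
sequence (a fixed cyclic order of the agents, repeated until all items are allocated) is EF1:
agent `i`'s envy towards `j` is eliminated by removing one item from `i`'s own bundle. -/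
theorem stmt3 {n : ℕ} (hn : 0 < n) {O : Type*} [Fintype O] [DecidableEq O]
    (u : Fin n → O → ℝ) (hneg : ∀ i o, u i o < 0)
    (π : Equiv.Perm (Fin n))
    (seq : List (Fin n)) (hlen : seq.length = Fintype.card O)
    (hRR : ∀ k (hk : k < seq.length), seq.get ⟨k, hk⟩ = π ⟨k % n, Nat.mod_lt _ hn⟩)
    (picks : List O) (hvalid : seqValid u seq picks Finset.univ) :
    ∀ i j : Fin n, ∃ O' ⊆ bundleOf seq picks i, O'.card ≤ 1 ∧
      ∑ o ∈ bundleOf seq picks j, u i o ≤ ∑ o ∈ bundleOf seq picks i \ O', u i o := by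
  intro i j
  have hp : picks.length = seq.length := seqValid_length u seq picks _ hvalid
  have hnd : picks.Nodup := seqValid_nodup u seq picks _ hvalid
  by_cases hij : i = j
  · subst hij; exact ⟨∅, empty_subset _, by simp, by simp⟩
  rcases isEmpty_or_nonempty O with hO | hO
  · have h0 : seq.length = 0 := by simp [hlen]
    obtain rfl : seq = [] := List.length_eq_zero_iff.mp h0
    obtain rfl : picks = [] := List.length_eq_zero_iff.mp (by simpa using hp)
    exact ⟨∅, empty_subset _, by simp, by simp [bundleOf]⟩
  obtain ⟨o₀⟩ := hO
  set p : ℕ → O := fun k => picks.getD k o₀ with hpdef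
  have hpget : ∀ k (h : k < picks.length), p k = picks.get ⟨k, h⟩ := by
    intro k h; simp [hpdef, List.getD_eq_getElem, h, List.get_eq_getElem]
  have hpinj : ∀ k1 < seq.length, ∀ k2 < seq.length, p k1 = p k2 → k1 = k2 := by
    intro k1 h1 k2 h2 hpp
    rw [hpget k1 (by omega), hpget k2 (by omega)] at hpp
    have := (List.Nodup.get_inj_iff hnd).mp hpp
    simpa using congrArg Fin.val this
  have hget : ∀ k (hk : k < seq.length) (a : Fin n),
      seq.get ⟨k, hk⟩ = a ↔ k % n = ((π.symm a : Fin n) : ℕ) := by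
    intro k hk a
    rw [hRR k hk, Equiv.apply_eq_iff_eq_symm_apply, Fin.ext_iff]
  have hbundle : ∀ a : Fin n, bundleOf seq picks a =
      ((Finset.range seq.length).filter
        (fun k => k % n = ((π.symm a : Fin n) : ℕ))).image p := by
    intro a
    ext o
    rw [mem_bundleOf]
    simp only [Finset.mem_image, Finset.mem_filter, Finset.mem_range]
    constructor
    · rintro ⟨k, h1, h2, hs, hpk⟩
      exact ⟨k, ⟨h1, (hget k h1 a).mp hs⟩, by rw [hpget k h2]; exact hpk⟩
    · rintro ⟨k, ⟨h1, hm⟩, hpk⟩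
      exact ⟨k, h1, by omega, (hget k h1 a).mpr hm, by rw [← hpget k (by omega)]; exact hpk⟩
  have hsum : ∀ (i' : Fin n) (S : Finset ℕ), S ⊆ Finset.range seq.length →
      ∑ o ∈ S.image p, u i' o = ∑ k ∈ S, u i' (p k) := by
    intro i' S hS
    refine Finset.sum_image ?_
    intro x hx y hy hxy
    exact hpinj x (Finset.mem_range.mp (hS hx)) y (Finset.mem_range.mp (hS hy)) hxy
  set di := ((π.symm i : Fin n) : ℕ) with hdi_def
  set dj := ((π.symm j : Fin n) : ℕ) with hdj_def
  have hdi : di < n := (π.symm i).isLt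
  have hdj : dj < n := (π.symm j).isLt
  have hdij : di ≠ dj := by
    intro h
    exact hij (by simpa using congrArg π (Fin.ext h : (π.symm i : Fin n) = π.symm j))
  set t := if di < dj then dj - di else dj + n - di with ht_def
  have ht0 : 0 < t := by rw [ht_def]; split <;> omega
  have htn : t < n := by rw [ht_def]; split <;> omega
  have hmodkey : ∀ m c, c < n → (n * m + c) % n = c := by
    intro m c hc; rw [Nat.mul_add_mod]; exact Nat.mod_eq_of_lt hc
  have hmod_sub : ∀ k, k % n = dj → t ≤ k → (k - t) % n = di := by
    intro k hk htk
    obtain ⟨q, hq⟩ : ∃ q, k = n * q + dj :=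
      ⟨k / n, by rw [← hk]; exact (Nat.div_add_mod k n).symm⟩
    by_cases hc : di < dj
    · have ht' : t = dj - di := if_pos hc
      have : k - t = n * q + di := by omega
      rw [this]; exact hmodkey q di hdi
    · have ht' : t = dj + n - di := if_neg hc
      rcases Nat.eq_zero_or_pos q with rfl | hqpos
      · exfalso; simp at hq; omega
      obtain ⟨q', rfl⟩ : ∃ q', q = q' + 1 := ⟨q - 1, by omega⟩
      rw [Nat.mul_succ] at hq
      have : k - t = n * q' + di := by omega
      rw [this]; exact hmodkey q' di hdi
  have hmod_add : ∀ k, k % n = di → (k + t) % n = dj := by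
    intro k hk
    obtain ⟨q, hq⟩ : ∃ q, k = n * q + di :=
      ⟨k / n, by rw [← hk]; exact (Nat.div_add_mod k n).symm⟩
    by_cases hc : di < dj
    · have ht' : t = dj - di := if_pos hc
      have : k + t = n * q + dj := by omega
      rw [this]; exact hmodkey q dj hdj
    · have ht' : t = dj + n - di := if_neg hc
      have : k + t = n * (q + 1) + dj := by rw [Nat.mul_succ]; omega
      rw [this]; exact hmodkey (q + 1) dj hdj
  set Ki := (Finset.range seq.length).filter (fun k => k % n = di) with hKi_def
  set Kj := (Finset.range seq.length).filter (fun k => k % n = dj) with hKj_def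
  set Kj' := Kj.filter (fun k => t ≤ k) with hKj'_def
  set D := Ki.filter (fun k => seq.length ≤ k + t) with hD_def
  have hDsub : D ⊆ Ki := Finset.filter_subset _ _
  have hKisub : Ki ⊆ Finset.range seq.length := Finset.filter_subset _ _
  have hKjsub : Kj ⊆ Finset.range seq.length := Finset.filter_subset _ _
  have hDcard : D.card ≤ 1 := by
    refine Finset.card_le_one.mpr ?_
    intro a ha b hb
    simp only [hD_def, hKi_def, Finset.mem_filter, Finset.mem_range] at ha hb
    obtain ⟨⟨haL, had⟩, hat⟩ := ha
    obtain ⟨⟨hbL, hbd⟩, hbt⟩ := hb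
    obtain ⟨qa, hqa⟩ : ∃ q, a = n * q + di :=
      ⟨a / n, by rw [← had]; exact (Nat.div_add_mod a n).symm⟩
    obtain ⟨qb, hqb⟩ : ∃ q, b = n * q + di :=
      ⟨b / n, by rw [← hbd]; exact (Nat.div_add_mod b n).symm⟩
    have h1 : n * qa < n * (qb + 1) := by rw [Nat.mul_succ]; omega
    have h2 : n * qb < n * (qa + 1) := by rw [Nat.mul_succ]; omega
    have h1' : qa < qb + 1 := Nat.lt_of_mul_lt_mul_left h1
    have h2' : qb < qa + 1 := Nat.lt_of_mul_lt_mul_left h2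
    have hqq : qa = qb := by omega
    subst hqq
    omega
  have hKiD : Ki \ D = Kj'.image (fun k => k - t) := by
    have hfilt : Ki \ D = Ki.filter (fun k => ¬ seq.length ≤ k + t) := by
      rw [hD_def, Finset.filter_not]
    rw [hfilt]
    ext m
    simp only [hKi_def, hKj'_def, hKj_def, Finset.mem_filter, Finset.mem_range,
      Finset.mem_image, Nat.not_le]
    constructor
    · rintro ⟨⟨hmL, hmd⟩, hmt⟩
      exact ⟨m + t, ⟨⟨by omega, hmod_add m hmd⟩, by omega⟩, by omega⟩
    · rintro ⟨k, ⟨⟨hkL, hkd⟩, htk⟩, rfl⟩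
      refine ⟨⟨by omega, hmod_sub k hkd htk⟩, by omega⟩
  have himg_sub : D.image p ⊆ bundleOf seq picks i := by
    rw [hbundle i]
    exact Finset.image_subset_image hDsub
  refine ⟨D.image p, himg_sub, le_trans Finset.card_image_le hDcard, ?_⟩
  calc ∑ o ∈ bundleOf seq picks j, u i o
      = ∑ k ∈ Kj, u i (p k) := by rw [hbundle j, hsum i Kj hKjsub]
    _ ≤ ∑ k ∈ Kj', u i (p k) := by
        have hsplit := Finset.sum_filter_add_sum_filter_not Kj (fun k => t ≤ k)
          (fun k => u i (p k))
        have hrest : ∑ k ∈ Kj.filter (fun k => ¬ t ≤ k), u i (p k) ≤ 0 :=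
          Finset.sum_nonpos (fun k _ => le_of_lt (hneg i _))
        rw [hKj'_def]
        linarith
    _ ≤ ∑ k ∈ Kj', u i (p (k - t)) := by
        refine Finset.sum_le_sum ?_
        intro k hk
        simp only [hKj'_def, hKj_def, Finset.mem_filter, Finset.mem_range] at hk
        obtain ⟨⟨hkL, hkd⟩, htk⟩ := hk
        have hktL : k - t < seq.length := by omega
        have hktd : (k - t) % n = di := hmod_sub k hkd htk
        have hsg : seq.get ⟨k - t, hktL⟩ = i := (hget (k - t) hktL i).mpr hktd
        have hgr := seqValid_greedy u seq picks _ hvalid (k - t) k hktL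
          (by omega) (by omega) (by omega)
        rw [hsg] at hgr
        rw [hpget k (by omega), hpget (k - t) (by omega)]
        exact hgr
    _ = ∑ m ∈ Kj'.image (fun k => k - t), u i (p m) := by
        refine (Finset.sum_image (s := Kj') (g := fun k => k - t)
          (f := fun m => u i (p m)) ?_).symm
        intro x hx y hy hxy
        simp only [Finset.mem_coe, hKj'_def, Finset.mem_filter] at hx hy
        have hxy' : x - t = y - t := hxy
        omega
    _ = ∑ m ∈ Ki \ D, u i (p m) := by rw [hKiD]
    _ = ∑ m ∈ Ki, u i (p m) - ∑ m ∈ D, u i (p m) := Finset.sum_sdiff_eq_sub hDsub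
    _ = ∑ o ∈ bundleOf seq picks i, u i o - ∑ o ∈ D.image p, u i o := by
        rw [hbundle i, hsum i Ki hKisub, hsum i D (subset_trans hDsub hKisub)]
    _ = ∑ o ∈ bundleOf seq picks i \ D.image p, u i o :=
        (Finset.sum_sdiff_eq_sub himg_sub).symm
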